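/- arXiv:1509.05877 — 6 statements merged into one kernel-verified Lean document; each statement's English description precedes it below -/
import Mathlib

section
/- If Y given X = x has Binomial(N', f(x)) distribution, then the symmetrized KL divergence between the joint distribution P(x,y) and the product P(x)P(y) equals N' · Cov(f(X), log(f(X)/(1−f(X)))). -/
lemma binom_sum (N : ℕ) (p q : ℝ) :
    ∑ y ∈ Finset.range (N+1), (N.choose y : ℝ) * p ^ y * q ^ (N - y) = (p + q) ^ N := by
  rw [add_pow]
  exact Finset.sum_congr rfl fun y _ => by ring

lemma binom_mean (N : ℕ) (hN : 0 < N) (p q : ℝ) :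
    ∑ y ∈ Finset.range (N+1), (y : ℝ) * ((N.choose y : ℝ) * p ^ y * q ^ (N - y))
      = N * p * (p + q) ^ (N - 1) := by
  obtain ⟨M, rfl⟩ := Nat.exists_eq_succ_of_ne_zero hN.ne'
  rw [Finset.sum_range_succ']
  simp only [Nat.cast_zero, zero_mul, add_zero]
  have key : ∀ y ∈ Finset.range (M+1),
      ((y+1 : ℕ) : ℝ) * (((M+1).choose (y+1) : ℝ) * p ^ (y+1) * q ^ (M+1 - (y+1)))
      = ((M:ℝ)+1) * p * ((M.choose y : ℝ) * p ^ y * q ^ (M - y)) := by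
    intro y _
    have h1 : (M+1) * M.choose y = (M+1).choose (y+1) * (y+1) := Nat.add_one_mul_choose_eq M y
    have h2 : (((M+1) * M.choose y : ℕ) : ℝ) = (((M+1).choose (y+1) * (y+1) : ℕ) : ℝ) := by
      rw [h1]
    push_cast at h2
    have h3 : M + 1 - (y+1) = M - y := by omega
    rw [h3, pow_succ]
    push_cast
    linear_combination (-(p ^ y * p * q ^ (M - y))) * h2
  rw [Finset.sum_congr rfl key, ← Finset.mul_sum, binom_sum]
  simp

/-- For a Binomial channel `Y | X = x ~ Binomial(N, f(x))` with discrete input `X`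
distributed according to `px`, the symmetrized KL divergence between the joint
distribution `P(x,y)` and the product of marginals `P(x)P(y)`, which equals
`E_{P(x,y)} log P(y|x) − E_{P(x)P(y)} log P(y|x)`, is exactly
`N · Cov(f(X), log(f(X)/(1−f(X))))`. -/
theorem stmt_1 {ι : Type*} [Fintype ι] (N : ℕ) (hN : 0 < N)
    (px : ι → ℝ) (hpx : ∀ i, 0 ≤ px i) (hsum : ∑ i, px i = 1)
    (f : ι → ℝ) (hf : ∀ i, f i ∈ Set.Ioo (0:ℝ) 1) :
    let b : ι → ℕ → ℝ := fun i y => (N.choose y : ℝ) * f i ^ y * (1 - f i) ^ (N - y)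
    let py : ℕ → ℝ := fun y => ∑ i, px i * b i y
    let h : ι → ℝ := fun i => Real.log (f i / (1 - f i))
    (∑ i, ∑ y ∈ Finset.range (N + 1),
        (px i * b i y - px i * py y) * Real.log (b i y))
      = (N : ℝ) * ((∑ i, px i * (f i * h i))
          - (∑ i, px i * f i) * (∑ i, px i * h i)) := by
  intro b py h
  have hf0 : ∀ i, 0 < f i := fun i => (hf i).1
  have hf1 : ∀ i, 0 < 1 - f i := fun i => by have := (hf i).2; linarith
  -- basic facts
  have hb_sum : ∀ i, ∑ y ∈ Finset.range (N+1), b i y = 1 := by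
    intro i
    have := binom_sum N (f i) (1 - f i)
    simpa using this
  have hb_mean : ∀ i, ∑ y ∈ Finset.range (N+1), (y:ℝ) * b i y = N * f i := by
    intro i
    have := binom_mean N hN (f i) (1 - f i)
    simpa using this
  have hpy_sum : ∑ y ∈ Finset.range (N+1), py y = 1 := by
    rw [Finset.sum_comm]
    simp only [py, ← Finset.mul_sum]
    simp_rw [hb_sum]
    simpa using hsum
  have hpy_mean : ∑ y ∈ Finset.range (N+1), (y:ℝ) * py y
      = N * ∑ i, px i * f i := by
    simp only [py, Finset.mul_sum]
    rw [Finset.sum_comm]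
    have : ∀ i, ∑ y ∈ Finset.range (N+1), (y:ℝ) * (px i * b i y) = px i * (N * f i) := by
      intro i
      rw [← hb_mean i, Finset.mul_sum]
      exact Finset.sum_congr rfl fun y _ => by ring
    rw [Finset.sum_congr rfl fun i _ => this i]
    exact Finset.sum_congr rfl fun i _ => by ring
  -- log decomposition
  have hlog : ∀ i, ∀ y ∈ Finset.range (N+1),
      Real.log (b i y) = Real.log (N.choose y : ℝ) + (y:ℝ) * h i + N * Real.log (1 - f i) := by
    intro i y hy
    have hyN : y ≤ N := Nat.lt_succ_iff.mp (Finset.mem_range.mp hy)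
    have hc : (0:ℝ) < (N.choose y : ℝ) := by
      exact_mod_cast Nat.choose_pos hyN
    have hpf : (0:ℝ) < f i ^ y := pow_pos (hf0 i) y
    have hpq : (0:ℝ) < (1 - f i) ^ (N - y) := pow_pos (hf1 i) _
    rw [show b i y = (N.choose y : ℝ) * f i ^ y * (1 - f i) ^ (N - y) from rfl,
      Real.log_mul (by positivity) hpq.ne', Real.log_mul hc.ne' hpf.ne',
      Real.log_pow, Real.log_pow]
    have hcast : ((N - y : ℕ) : ℝ) = (N:ℝ) - (y:ℝ) := by
      push_cast [hyN]; ring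
    rw [hcast]
    have hh : h i = Real.log (f i) - Real.log (1 - f i) :=
      Real.log_div (hf0 i).ne' (hf1 i).ne'
    rw [hh]; ring
  -- rewrite each inner term
  have key : ∀ i, ∑ y ∈ Finset.range (N+1),
      (px i * b i y - px i * py y) * Real.log (b i y)
      = ∑ y ∈ Finset.range (N+1),
          ((px i * b i y - px i * py y) * Real.log (N.choose y : ℝ))
        + px i * h i * ((N:ℝ) * f i - (N:ℝ) * ∑ j, px j * f j)
        + px i * ((N:ℝ) * Real.log (1 - f i)) * (1 - 1) := by
    intro i
    have expand : ∀ y ∈ Finset.range (N+1),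
        (px i * b i y - px i * py y) * Real.log (b i y)
        = (px i * b i y - px i * py y) * Real.log (N.choose y : ℝ)
          + px i * h i * ((y:ℝ) * b i y - (y:ℝ) * py y)
          + px i * ((N:ℝ) * Real.log (1 - f i)) * (b i y - py y) := by
      intro y hy
      rw [hlog i y hy]; ring
    rw [Finset.sum_congr rfl expand]
    rw [Finset.sum_add_distrib, Finset.sum_add_distrib, ← Finset.mul_sum, ← Finset.mul_sum,
      Finset.sum_sub_distrib, Finset.sum_sub_distrib, hb_mean, hpy_mean, hb_sum, hpy_sum]
  rw [Finset.sum_congr rfl fun i _ => key i]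
  have hzero : ∑ i, ∑ y ∈ Finset.range (N+1),
      (px i * b i y - px i * py y) * Real.log (N.choose y : ℝ) = 0 := by
    rw [Finset.sum_comm]
    apply Finset.sum_eq_zero
    intro y _
    have : ∑ i, (px i * b i y - px i * py y) = 0 := by
      rw [Finset.sum_sub_distrib, ← Finset.sum_mul, hsum]
      simp [py]
    rw [← Finset.sum_mul, this, zero_mul]
  rw [Finset.sum_add_distrib, Finset.sum_add_distrib, hzero]
  simp only [sub_self, mul_zero, Finset.sum_const_zero, add_zero, zero_add]
  have e1 : ∀ x : ι, px x * h x * ((N:ℝ) * f x - (N:ℝ) * ∑ i, px i * f i)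
      = (N:ℝ) * (px x * (f x * h x)) - ((N:ℝ) * ∑ i, px i * f i) * (px x * h x) := by
    intro x; ring
  rw [Finset.sum_congr rfl fun x _ => e1 x, Finset.sum_sub_distrib,
    ← Finset.mul_sum, ← Finset.mul_sum]
  ring
end

section
/- For a Binomial channel where Y given X=x is Binomial(N', f(x)) with f increasing, the mutual information I(X;Y) is at most N' · Cov(f(X), log(f(X)/(1−f(X)))). -/
open Finset

private lemma binom_sum_one' (N : ℕ) (p : ℝ) :
    ∑ y ∈ Finset.range (N + 1), (N.choose y : ℝ) * p ^ y * (1 - p) ^ (N - y) = 1 := by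
  have h := add_pow p (1 - p) N
  rw [show p + (1 - p) = (1:ℝ) by ring, one_pow] at h
  calc ∑ y ∈ Finset.range (N + 1), (N.choose y : ℝ) * p ^ y * (1 - p) ^ (N - y)
      = ∑ y ∈ Finset.range (N + 1), p ^ y * (1 - p) ^ (N - y) * (N.choose y : ℝ) :=
        Finset.sum_congr rfl fun y _ => by ring
    _ = 1 := h.symm

private lemma binom_sum_mean' (N : ℕ) (p : ℝ) :
    ∑ y ∈ Finset.range (N + 1), (y : ℝ) * ((N.choose y : ℝ) * p ^ y * (1 - p) ^ (N - y))
      = (N : ℝ) * p := by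
  cases N with
  | zero => simp
  | succ M =>
    rw [Finset.sum_range_succ']
    simp only [Nat.cast_zero, zero_mul, add_zero]
    have key : ∀ k ∈ Finset.range (M + 1),
        ((k + 1 : ℕ) : ℝ) * (((M + 1).choose (k + 1) : ℝ) * p ^ (k + 1) * (1 - p) ^ (M + 1 - (k + 1)))
          = ((M : ℝ) + 1) * p * ((M.choose k : ℝ) * p ^ k * (1 - p) ^ (M - k)) := by
      intro k hk
      have hc : (M + 1 : ℕ) * M.choose k = (M + 1).choose (k + 1) * (k + 1) :=
        Nat.add_one_mul_choose_eq M k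
      have hc' : ((M : ℝ) + 1) * (M.choose k : ℝ) = ((M + 1).choose (k + 1) : ℝ) * ((k : ℝ) + 1) := by
        exact_mod_cast congrArg (Nat.cast (R := ℝ)) hc
      have hsub : M + 1 - (k + 1) = M - k := Nat.succ_sub_succ M k
      rw [hsub]
      push_cast
      linear_combination (-(p ^ (k + 1) * (1 - p) ^ (M - k))) * hc'
    rw [Finset.sum_congr rfl key, ← Finset.mul_sum, binom_sum_one' M p]
    push_cast
    ring

private lemma sum_g_eval (s : Finset ℕ) (w : ℕ → ℝ) (lp lq Nr : ℝ) :
    ∑ y ∈ s, w y * ((y : ℝ) * lp + (Nr - (y : ℝ)) * lq)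
      = lp * (∑ y ∈ s, (y : ℝ) * w y) - lq * (∑ y ∈ s, (y : ℝ) * w y)
        + lq * Nr * ∑ y ∈ s, w y := by
  calc ∑ y ∈ s, w y * ((y : ℝ) * lp + (Nr - (y : ℝ)) * lq)
      = ∑ y ∈ s, (lp * ((y : ℝ) * w y) - lq * ((y : ℝ) * w y) + lq * Nr * w y) :=
        Finset.sum_congr rfl fun y _ => by ring
    _ = ∑ y ∈ s, (lp * ((y : ℝ) * w y) - lq * ((y : ℝ) * w y)) + ∑ y ∈ s, lq * Nr * w y :=
        Finset.sum_add_distrib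
    _ = (∑ y ∈ s, lp * ((y : ℝ) * w y)) - (∑ y ∈ s, lq * ((y : ℝ) * w y))
          + ∑ y ∈ s, lq * Nr * w y := by rw [Finset.sum_sub_distrib]
    _ = lp * (∑ y ∈ s, (y : ℝ) * w y) - lq * (∑ y ∈ s, (y : ℝ) * w y)
          + lq * Nr * ∑ y ∈ s, w y := by
        rw [← Finset.mul_sum, ← Finset.mul_sum, ← Finset.mul_sum]

private lemma gibbs_point' {a c : ℝ} (ha : 0 ≤ a) (hc : 0 < c) :
    a - c ≤ a * (Real.log a - Real.log c) := by
  rcases eq_or_lt_of_le ha with h | h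
  · rw [← h]; simp; linarith
  · have h1 : Real.log (c / a) ≤ c / a - 1 := Real.log_le_sub_one_of_pos (by positivity)
    rw [Real.log_div (ne_of_gt hc) (ne_of_gt h)] at h1
    have h2 := mul_le_mul_of_nonneg_left h1 (le_of_lt h)
    have h3 : a * (c / a - 1) = c - a := by field_simp
    nlinarith

/-- For a Binomial channel `Y | X = x ~ Binomial(N, f(x))` with `f` increasing and a
finitely supported input `X`, the mutual information `I(X;Y)` is at most
`N · Cov(f(X), log(f(X)/(1−f(X))))`. -/
theorem stmt_2 {ι : Type*} [Fintype ι] (N : ℕ)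
    (px : ι → ℝ) (hpx : ∀ i, 0 ≤ px i) (hsum : ∑ i, px i = 1)
    (x : ι → ℝ) (f : ℝ → ℝ) (hf : Monotone f)
    (hf01 : ∀ t, f t ∈ Set.Ioo (0:ℝ) 1) :
    let b : ι → ℕ → ℝ := fun i y =>
      (N.choose y : ℝ) * f (x i) ^ y * (1 - f (x i)) ^ (N - y)
    let py : ℕ → ℝ := fun y => ∑ i, px i * b i y
    let h : ι → ℝ := fun i => Real.log (f (x i) / (1 - f (x i)))
    (∑ i, ∑ y ∈ Finset.range (N + 1), px i * b i y * Real.log (b i y / py y))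
      ≤ (N : ℝ) * ((∑ i, px i * (f (x i) * h i))
          - (∑ i, px i * f (x i)) * (∑ i, px i * h i)) := by
  intro b py h
  have hb_def : ∀ i y, b i y = (N.choose y : ℝ) * f (x i) ^ y * (1 - f (x i)) ^ (N - y) :=
    fun _ _ => rfl
  have hpy_def : ∀ y, py y = ∑ i, px i * b i y := fun _ => rfl
  have hh_def : ∀ i, h i = Real.log (f (x i) / (1 - f (x i))) := fun _ => rfl
  have hp0 : ∀ i, 0 < f (x i) := fun i => (hf01 (x i)).1
  have hp1 : ∀ i, f (x i) < 1 := fun i => (hf01 (x i)).2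
  have hq0 : ∀ i, 0 < 1 - f (x i) := fun i => by linarith [hp1 i]
  have hb_pos : ∀ i, ∀ y ∈ Finset.range (N + 1), 0 < b i y := by
    intro i y hy
    have hyN : y ≤ N := Nat.lt_succ_iff.mp (Finset.mem_range.mp hy)
    have hch : 0 < (N.choose y : ℝ) := by exact_mod_cast Nat.choose_pos hyN
    rw [hb_def]
    exact mul_pos (mul_pos hch (pow_pos (hp0 i) y)) (pow_pos (hq0 i) _)
  have hex : ∃ i, 0 < px i := by
    by_contra hcon
    push_neg at hcon
    have h0 : ∑ i, px i = 0 := Finset.sum_eq_zero fun i _ => le_antisymm (hcon i) (hpx i)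
    rw [hsum] at h0
    norm_num at h0
  have hpy_pos : ∀ y ∈ Finset.range (N + 1), 0 < py y := by
    intro y hy
    obtain ⟨i0, hi0⟩ := hex
    rw [hpy_def]
    exact Finset.sum_pos' (fun i _ => mul_nonneg (hpx i) (le_of_lt (hb_pos i y hy)))
      ⟨i0, Finset.mem_univ _, mul_pos hi0 (hb_pos i0 y hy)⟩
  have hsum_b : ∀ i, ∑ y ∈ Finset.range (N + 1), b i y = 1 := by
    intro i
    simp only [hb_def]
    exact binom_sum_one' N (f (x i))
  have hmean_b : ∀ i, ∑ y ∈ Finset.range (N + 1), (y : ℝ) * b i y = (N : ℝ) * f (x i) := by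
    intro i
    simp only [hb_def]
    exact binom_sum_mean' N (f (x i))
  have hpy_sum : ∑ y ∈ Finset.range (N + 1), py y = 1 := by
    simp only [hpy_def]
    rw [Finset.sum_comm]
    calc ∑ i, ∑ y ∈ Finset.range (N + 1), px i * b i y
        = ∑ i, px i * ∑ y ∈ Finset.range (N + 1), b i y := by
          exact Finset.sum_congr rfl fun i _ => (Finset.mul_sum _ _ _).symm
      _ = ∑ i, px i := Finset.sum_congr rfl fun i _ => by rw [hsum_b i, mul_one]
      _ = 1 := hsum
  have hpy_mean : ∑ y ∈ Finset.range (N + 1), (y : ℝ) * py y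
      = (N : ℝ) * ∑ i, px i * f (x i) := by
    simp only [hpy_def]
    calc ∑ y ∈ Finset.range (N + 1), (y : ℝ) * ∑ i, px i * b i y
        = ∑ y ∈ Finset.range (N + 1), ∑ i, (y : ℝ) * (px i * b i y) :=
          Finset.sum_congr rfl fun y _ => Finset.mul_sum _ _ _
      _ = ∑ i, ∑ y ∈ Finset.range (N + 1), (y : ℝ) * (px i * b i y) := Finset.sum_comm
      _ = ∑ i, px i * ∑ y ∈ Finset.range (N + 1), (y : ℝ) * b i y := by
          refine Finset.sum_congr rfl fun i _ => ?_
          rw [Finset.mul_sum]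
          exact Finset.sum_congr rfl fun y _ => by ring
      _ = ∑ i, (N : ℝ) * (px i * f (x i)) :=
          Finset.sum_congr rfl fun i _ => by rw [hmean_b i]; ring
      _ = (N : ℝ) * ∑ i, px i * f (x i) := by rw [← Finset.mul_sum]
  -- the symmetrized quantity
  set S : ℝ := ∑ i, ∑ y ∈ Finset.range (N + 1),
      px i * (b i y - py y) * Real.log (b i y / py y) with hS
  -- Step 1 : LHS ≤ S
  have step1 : (∑ i, ∑ y ∈ Finset.range (N + 1), px i * b i y * Real.log (b i y / py y)) ≤ S := by
    have hz : ∑ i, ∑ y ∈ Finset.range (N + 1), px i * (py y - b i y) = 0 := by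
      refine Finset.sum_eq_zero fun i _ => ?_
      rw [← Finset.mul_sum, Finset.sum_sub_distrib, hpy_sum, hsum_b i, sub_self, mul_zero]
    have key : ∀ i, ∀ y ∈ Finset.range (N + 1),
        px i * b i y * Real.log (b i y / py y)
          ≤ px i * (b i y - py y) * Real.log (b i y / py y) - px i * (py y - b i y) := by
      intro i y hy
      have hbp := hb_pos i y hy
      have hpp := hpy_pos y hy
      have hgib := gibbs_point' (le_of_lt hpp) hbp
      have hld : Real.log (b i y / py y) = Real.log (b i y) - Real.log (py y) :=
        Real.log_div (ne_of_gt hbp) (ne_of_gt hpp)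
      have hmul := mul_le_mul_of_nonneg_left hgib (hpx i)
      rw [hld]
      nlinarith [hmul]
    calc (∑ i, ∑ y ∈ Finset.range (N + 1), px i * b i y * Real.log (b i y / py y))
        ≤ ∑ i, ∑ y ∈ Finset.range (N + 1),
            (px i * (b i y - py y) * Real.log (b i y / py y) - px i * (py y - b i y)) :=
          Finset.sum_le_sum fun i _ => Finset.sum_le_sum (key i)
      _ = S - ∑ i, ∑ y ∈ Finset.range (N + 1), px i * (py y - b i y) := by
          rw [hS, ← Finset.sum_sub_distrib]
          exact Finset.sum_congr rfl fun i _ => Finset.sum_sub_distrib _ _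
      _ = S := by rw [hz, sub_zero]
  -- Step 2 : S equals the covariance expression
  set g : ι → ℕ → ℝ := fun i y =>
      (y : ℝ) * Real.log (f (x i)) + ((N : ℝ) - y) * Real.log (1 - f (x i)) with hg
  set c : ℕ → ℝ := fun y => Real.log (N.choose y : ℝ) - Real.log (py y) with hc
  have hL : ∀ i, ∀ y ∈ Finset.range (N + 1),
      Real.log (b i y / py y) = g i y + c y := by
    intro i y hy
    have hyN : y ≤ N := Nat.lt_succ_iff.mp (Finset.mem_range.mp hy)
    have hbp := hb_pos i y hy
    have hpp := hpy_pos y hy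
    have hch : (N.choose y : ℝ) ≠ 0 := by
      exact_mod_cast (Nat.choose_pos hyN).ne'
    have hpne : f (x i) ^ y ≠ 0 := (pow_pos (hp0 i) y).ne'
    have hqne : (1 - f (x i)) ^ (N - y) ≠ 0 := (pow_pos (hq0 i) _).ne'
    have hcast : ((N - y : ℕ) : ℝ) = (N : ℝ) - (y : ℝ) := Nat.cast_sub hyN
    rw [Real.log_div (ne_of_gt hbp) (ne_of_gt hpp), hb_def,
      Real.log_mul (mul_ne_zero hch hpne) hqne, Real.log_mul hch hpne,
      Real.log_pow, Real.log_pow, hg, hc]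
    simp only []
    rw [hcast]
    ring
  have hzero2 : ∑ i, ∑ y ∈ Finset.range (N + 1), px i * (b i y - py y) * c y = 0 := by
    rw [Finset.sum_comm]
    refine Finset.sum_eq_zero fun y _ => ?_
    have hz : ∑ i, px i * (b i y - py y) = 0 := by
      have h1 : ∑ i, px i * b i y = py y := (hpy_def y).symm
      have h2 : ∑ i, px i * py y = py y := by rw [← Finset.sum_mul, hsum, one_mul]
      calc ∑ i, px i * (b i y - py y)
          = ∑ i, (px i * b i y - px i * py y) := Finset.sum_congr rfl fun i _ => by ring
        _ = py y - py y := by rw [Finset.sum_sub_distrib, h1, h2]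
        _ = 0 := sub_self _
    calc ∑ i, px i * (b i y - py y) * c y
        = (∑ i, px i * (b i y - py y)) * c y := (Finset.sum_mul _ _ _).symm
      _ = 0 := by rw [hz, zero_mul]
  have hinner : ∀ i, ∑ y ∈ Finset.range (N + 1), (b i y - py y) * g i y
      = (N : ℝ) * (f (x i) - ∑ j, px j * f (x j)) * h i := by
    intro i
    have hA : ∑ y ∈ Finset.range (N + 1), b i y * g i y
        = Real.log (f (x i)) * ((N : ℝ) * f (x i))
          - Real.log (1 - f (x i)) * ((N : ℝ) * f (x i))
          + Real.log (1 - f (x i)) * (N : ℝ) * 1 := by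
      simp only [hg]
      rw [sum_g_eval, hmean_b i, hsum_b i]
    have hB : ∑ y ∈ Finset.range (N + 1), py y * g i y
        = Real.log (f (x i)) * ((N : ℝ) * ∑ j, px j * f (x j))
          - Real.log (1 - f (x i)) * ((N : ℝ) * ∑ j, px j * f (x j))
          + Real.log (1 - f (x i)) * (N : ℝ) * 1 := by
      simp only [hg]
      rw [sum_g_eval, hpy_mean, hpy_sum]
    have hhi : h i = Real.log (f (x i)) - Real.log (1 - f (x i)) := by
      rw [hh_def, Real.log_div (ne_of_gt (hp0 i)) (ne_of_gt (hq0 i))]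
    calc ∑ y ∈ Finset.range (N + 1), (b i y - py y) * g i y
        = (∑ y ∈ Finset.range (N + 1), b i y * g i y)
          - ∑ y ∈ Finset.range (N + 1), py y * g i y := by
          rw [← Finset.sum_sub_distrib]
          exact Finset.sum_congr rfl fun y _ => by ring
      _ = (N : ℝ) * (f (x i) - ∑ j, px j * f (x j)) * h i := by
          rw [hA, hB, hhi]; ring
  have hS_eq : S = ∑ i, px i * ((N : ℝ) * (f (x i) - ∑ j, px j * f (x j)) * h i) := by
    calc S = ∑ i, ∑ y ∈ Finset.range (N + 1),
          (px i * (b i y - py y) * g i y + px i * (b i y - py y) * c y) := by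
          rw [hS]
          refine Finset.sum_congr rfl fun i _ => Finset.sum_congr rfl fun y hy => ?_
          rw [hL i y hy]; ring
      _ = (∑ i, ∑ y ∈ Finset.range (N + 1), px i * (b i y - py y) * g i y)
          + ∑ i, ∑ y ∈ Finset.range (N + 1), px i * (b i y - py y) * c y := by
          rw [← Finset.sum_add_distrib]
          exact Finset.sum_congr rfl fun i _ => Finset.sum_add_distrib
      _ = ∑ i, ∑ y ∈ Finset.range (N + 1), px i * (b i y - py y) * g i y := by
          rw [hzero2, add_zero]
      _ = ∑ i, px i * ∑ y ∈ Finset.range (N + 1), (b i y - py y) * g i y := by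
          refine Finset.sum_congr rfl fun i _ => ?_
          rw [Finset.mul_sum]
          exact Finset.sum_congr rfl fun y _ => by ring
      _ = _ := Finset.sum_congr rfl fun i _ => by rw [hinner i]
  have hfinal : ∑ i, px i * ((N : ℝ) * (f (x i) - ∑ j, px j * f (x j)) * h i)
      = (N : ℝ) * ((∑ i, px i * (f (x i) * h i))
          - (∑ i, px i * f (x i)) * (∑ i, px i * h i)) := by
    calc ∑ i, px i * ((N : ℝ) * (f (x i) - ∑ j, px j * f (x j)) * h i)
        = ∑ i, ((N : ℝ) * (px i * (f (x i) * h i))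
            - ((N : ℝ) * ∑ j, px j * f (x j)) * (px i * h i)) :=
          Finset.sum_congr rfl fun i _ => by ring
      _ = (N : ℝ) * (∑ i, px i * (f (x i) * h i))
          - ((N : ℝ) * ∑ j, px j * f (x j)) * ∑ i, px i * h i := by
          rw [Finset.sum_sub_distrib, ← Finset.mul_sum, ← Finset.mul_sum]
      _ = _ := by ring
  exact le_of_le_of_eq step1 (hS_eq.trans hfinal)
end

section
/- The function α ↦ −α(1−p)log α + α p log p − (1−α+αp) log(1−α+αp) on (0,1), for fixed p ∈ (0,1), attains its maximum at α* = 1/(1 − p + e^{−p log p/(1−p)}), and the maximum value equals H(1/(1+e^{g(p)})) − g(p)/(1+e^{g(p)}), where H(q) = −q log q − (1−q) log(1−q) and g(p) = H(p)/(1−p). -/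
set_option maxHeartbeats 1000000


/-- The Z-channel mutual information `f_I(·,p)` on `(0,1)` attains its maximum at
`α* = 1/(1−p+e^{−p log p/(1−p)})` and the maximum value equals
`H(1/(1+e^{g(p)})) − g(p)/(1+e^{g(p)})` with `H` the binary entropy and
`g(p) = H(p)/(1−p)`. -/
theorem stmt_5 (p : ℝ) (hp : p ∈ Set.Ioo (0:ℝ) 1) :
    let fI : ℝ → ℝ := fun α => -α * (1 - p) * Real.log α + α * p * Real.log p
      - (1 - α + α * p) * Real.log (1 - α + α * p)
    let H : ℝ → ℝ := fun q => -q * Real.log q - (1 - q) * Real.log (1 - q)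
    let g : ℝ := H p / (1 - p)
    let αstar : ℝ := 1 / (1 - p + Real.exp (-(p * Real.log p) / (1 - p)))
    αstar ∈ Set.Ioo (0:ℝ) 1 ∧
    (∀ α ∈ Set.Ioo (0:ℝ) 1, fI α ≤ fI αstar) ∧
    fI αstar = H (1 / (1 + Real.exp g)) - g / (1 + Real.exp g) := by
  obtain ⟨hp0, hp1⟩ := hp
  intro fI H g αstar
  have h1p : (0:ℝ) < 1 - p := by linarith
  set c : ℝ := -(p * Real.log p) / (1 - p) with hc
  have hlogp : Real.log p < 0 := Real.log_neg hp0 hp1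
  have hc0 : 0 < c := by
    rw [hc]; apply div_pos _ h1p; nlinarith
  have hE1 : (1:ℝ) < Real.exp c := by
    have := Real.exp_lt_exp.mpr hc0; simpa using this
  have hD0 : (0:ℝ) < 1 - p + Real.exp c := by linarith
  have hD1 : (1:ℝ) < 1 - p + Real.exp c := by linarith
  have hαs : αstar = 1 / (1 - p + Real.exp c) := rfl
  have hαs0 : 0 < αstar := by rw [hαs]; exact one_div_pos.mpr hD0
  have hαs1 : αstar < 1 := by rw [hαs, div_lt_one hD0]; linarith
  have hu : ∀ α : ℝ, α < 1 → 0 < 1 - α + α * p := by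
    intro α hα; nlinarith
  have hderiv : ∀ α ∈ Set.Ioo (0:ℝ) 1,
      HasDerivAt fI ((1 - p) * (Real.log (1 - α + α * p) - Real.log α) + p * Real.log p) α := by
    intro α hα
    obtain ⟨hα0, hα1⟩ := hα
    have hu0 : 0 < 1 - α + α * p := hu α hα1
    have h1 : HasDerivAt (fun x : ℝ => -x * (1 - p) * Real.log x)
        ((-(1 - p)) * Real.log α + (-α * (1 - p)) * α⁻¹) α := by
      have hf : HasDerivAt (fun x : ℝ => -x * (1 - p)) (-(1 - p)) α := by
        simpa using ((hasDerivAt_id α).neg.mul_const (1 - p))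
      exact hf.mul (Real.hasDerivAt_log hα0.ne')
    have h2 : HasDerivAt (fun x : ℝ => x * p * Real.log p) (p * Real.log p) α := by
      simpa [mul_assoc] using (hasDerivAt_id α).mul_const (p * Real.log p)
    have h3 : HasDerivAt (fun x : ℝ => 1 - x + x * p) (-1 + p) α := by
      have := ((hasDerivAt_const α (1:ℝ)).sub (hasDerivAt_id' α)).add
        ((hasDerivAt_id' α).mul_const p)
      exact this.congr_deriv (by ring)
    have h4 : HasDerivAt (fun x : ℝ => (1 - x + x * p) * Real.log (1 - x + x * p))
        ((-1 + p) * Real.log (1 - α + α * p) + (1 - α + α * p) * ((-1 + p) / (1 - α + α * p))) α :=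
      h3.mul (h3.log hu0.ne')
    have h5 := (h1.add h2).sub h4
    refine h5.congr_deriv ?_
    field_simp
    ring
  have hφanti : ∀ x ∈ Set.Ioo (0:ℝ) 1, ∀ y ∈ Set.Ioo (0:ℝ) 1, x < y →
      (1 - p) * (Real.log (1 - y + y * p) - Real.log y) + p * Real.log p
        < (1 - p) * (Real.log (1 - x + x * p) - Real.log x) + p * Real.log p := by
    intro x hx y hy hxy
    have h1 : Real.log (1 - y + y * p) < Real.log (1 - x + x * p) :=
      Real.log_lt_log (hu y hy.2) (by nlinarith)
    have h2 : Real.log x < Real.log y := Real.log_lt_log hx.1 hxy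
    nlinarith [h1, h2, h1p]
  have hβ : 1 - αstar + αstar * p = Real.exp c * αstar := by
    rw [hαs]; field_simp; ring
  have hφ0 : (1 - p) * (Real.log (1 - αstar + αstar * p) - Real.log αstar) + p * Real.log p = 0 := by
    rw [hβ, Real.log_mul (Real.exp_ne_zero c) hαs0.ne', Real.log_exp, hc]
    field_simp
    ring
  have hmax : ∀ α ∈ Set.Ioo (0:ℝ) 1, fI α ≤ fI αstar := by
    intro α hα
    rcases lt_trichotomy α αstar with h | h | h
    · have hmono : StrictMonoOn fI (Set.Ioc 0 αstar) := by
        apply strictMonoOn_of_deriv_pos (convex_Ioc 0 αstar)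
        · intro x hx
          have hx' : x ∈ Set.Ioo (0:ℝ) 1 := ⟨hx.1, lt_of_le_of_lt hx.2 hαs1⟩
          exact (hderiv x hx').differentiableAt.continuousAt.continuousWithinAt
        · intro x hx
          rw [interior_Ioc] at hx
          have hx' : x ∈ Set.Ioo (0:ℝ) 1 := ⟨hx.1, hx.2.trans hαs1⟩
          rw [(hderiv x hx').deriv]
          have h2 := hφanti x hx' αstar ⟨hαs0, hαs1⟩ hx.2
          rw [hφ0] at h2
          exact h2
      exact le_of_lt (hmono ⟨hα.1, h.le⟩ ⟨hαs0, le_refl _⟩ h)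
    · exact le_of_eq (by rw [h])
    · have hanti : StrictAntiOn fI (Set.Ico αstar 1) := by
        apply strictAntiOn_of_deriv_neg (convex_Ico αstar 1)
        · intro x hx
          have hx' : x ∈ Set.Ioo (0:ℝ) 1 := ⟨lt_of_lt_of_le hαs0 hx.1, hx.2⟩
          exact (hderiv x hx').differentiableAt.continuousAt.continuousWithinAt
        · intro x hx
          rw [interior_Ico] at hx
          have hx' : x ∈ Set.Ioo (0:ℝ) 1 := ⟨hαs0.trans hx.1, hx.2⟩
          rw [(hderiv x hx').deriv]
          have h2 := hφanti αstar ⟨hαs0, hαs1⟩ x hx' hx.1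
          rw [hφ0] at h2
          exact h2
      exact le_of_lt (hanti ⟨le_refl _, hαs1⟩ ⟨h.le, hα.2⟩ h)
  refine ⟨⟨hαs0, hαs1⟩, hmax, ?_⟩
  -- value computation
  have hgg : g = c - Real.log (1 - p) := by
    simp only [g, H, hc]
    field_simp
  have hexpg : Real.exp g = Real.exp c / (1 - p) := by
    rw [hgg, Real.exp_sub, Real.exp_log h1p]
  have h1g : (1:ℝ) + Real.exp g = (1 - p + Real.exp c) / (1 - p) := by
    rw [hexpg]; field_simp
  have h1q : 1 - 1 / (1 + Real.exp g) = Real.exp c / (1 - p + Real.exp c) := by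
    rw [h1g, one_div, inv_div]; field_simp; ring
  have hq : 1 / (1 + Real.exp g) = (1 - p) / (1 - p + Real.exp c) := by
    rw [h1g, one_div, inv_div]
  have hlogq : Real.log ((1 - p) / (1 - p + Real.exp c))
      = Real.log (1 - p) - Real.log (1 - p + Real.exp c) :=
    Real.log_div h1p.ne' hD0.ne'
  have hlog1q : Real.log (Real.exp c / (1 - p + Real.exp c))
      = c - Real.log (1 - p + Real.exp c) := by
    rw [Real.log_div (Real.exp_ne_zero c) hD0.ne', Real.log_exp]
  have hloga : Real.log αstar = -Real.log (1 - p + Real.exp c) := by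
    rw [hαs, one_div, Real.log_inv]
  have hlogβ : Real.log (1 - αstar + αstar * p) = c + Real.log αstar := by
    rw [hβ, Real.log_mul (Real.exp_ne_zero c) hαs0.ne', Real.log_exp]
  have hLHS : fI αstar = ((1 - p + Real.exp c) * Real.log (1 - p + Real.exp c)
      + p * Real.log p - Real.exp c * c) / (1 - p + Real.exp c) := by
    simp only [fI]
    rw [hlogβ, hβ, hloga, hαs]
    field_simp
    ring
  have hRHS : H (1 / (1 + Real.exp g)) - g / (1 + Real.exp g)
      = ((1 - p + Real.exp c) * Real.log (1 - p + Real.exp c)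
      + p * Real.log p - Real.exp c * c) / (1 - p + Real.exp c) := by
    simp only [H]
    rw [h1q, hq, hlogq, hlog1q, h1g, hgg, hc]
    field_simp
    ring
  rw [hLHS, hRHS]
end

section
/- The capacity of the binary-input Binomial channel under the average constraint E[X] ≤ α_s A is: if α_s ≥ α* = 1/(1−p_c+e^{−p_c log p_c/(1−p_c)}) then C = H(1/(1+e^{g(p_c)})) − g(p_c)/(1+e^{g(p_c)}); otherwise C = f_I(α_s, p_c), where p_c = (c/(A+c))^{N'}. -/
lemma tangent_xlogx (x y : ℝ) (hx : 0 ≤ x) (hy : 0 < y) :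
    y * Real.log y + (Real.log y + 1) * (x - y) ≤ x * Real.log x := by
  rcases hx.eq_or_lt with h | h
  · rw [← h]
    simp only [Real.log_zero, zero_mul]
    nlinarith
  · have h1 := Real.log_le_sub_one_of_pos (div_pos hy h)
    rw [Real.log_div hy.ne' h.ne'] at h1
    have h2 : x * (y / x - 1) = y - x := by field_simp
    nlinarith [mul_le_mul_of_nonneg_left h1 h.le, h2]

lemma fI_tangent_le (pc m α : ℝ) (hp1 : pc < 1) (hm : 0 < m)
    (hm1 : m * (1 - pc) < 1) (hα : 0 ≤ α) (hα1 : α * (1 - pc) ≤ 1) :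
    -α * (1 - pc) * Real.log α + α * pc * Real.log pc
      - (1 - α + α * pc) * Real.log (1 - α + α * pc)
    ≤ (-m * (1 - pc) * Real.log m + m * pc * Real.log pc
      - (1 - m + m * pc) * Real.log (1 - m + m * pc))
      + (α - m) * ((1 - pc) * (Real.log (1 - m + m * pc) - Real.log m) + pc * Real.log pc) := by
  have t1 := tangent_xlogx α m hα hm
  have t2 := tangent_xlogx (1 - α + α * pc) (1 - m + m * pc) (by nlinarith) (by nlinarith)
  nlinarith [mul_le_mul_of_nonneg_left t1 (by linarith : (0:ℝ) ≤ 1 - pc), t2]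

/-- Capacity of the binary-input Binomial channel (`X ∈ {0,A}`,
`Y|X=x ~ Binomial(N, x/(x+c))`, so crossover `p_c = (c/(A+c))^N`) under the
average constraint `α ≤ α_s`: if `α_s ≥ α*` then
`C = H(1/(1+e^{g(p_c)})) − g(p_c)/(1+e^{g(p_c)})`, otherwise `C = f_I(α_s, p_c)`. -/
theorem stmt_8 (N : ℕ) (hN : 0 < N) (A c αs : ℝ) (hA : 0 < A) (hc : 0 < c)
    (hαs : αs ∈ Set.Ioc (0:ℝ) 1) :
    let pc : ℝ := (c / (A + c)) ^ N
    let fI : ℝ → ℝ := fun α => -α * (1 - pc) * Real.log α + α * pc * Real.log pc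
      - (1 - α + α * pc) * Real.log (1 - α + α * pc)
    let H : ℝ → ℝ := fun q => -q * Real.log q - (1 - q) * Real.log (1 - q)
    let g : ℝ := H pc / (1 - pc)
    let αstar : ℝ := 1 / (1 - pc + Real.exp (-(pc * Real.log pc) / (1 - pc)))
    (αstar ≤ αs →
      sSup (fI '' Set.Icc 0 αs) = H (1 / (1 + Real.exp g)) - g / (1 + Real.exp g)) ∧
    (αs < αstar → sSup (fI '' Set.Icc 0 αs) = fI αs) := by
  intro pc fI H g αstar
  obtain ⟨hs0, hs1⟩ := hαs
  have hp0 : 0 < pc := pow_pos (div_pos hc (by linarith)) N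
  have hp1 : pc < 1 := by
    apply pow_lt_one₀ (le_of_lt (div_pos hc (by linarith)))
      ((div_lt_one (by linarith)).2 (by linarith)) hN.ne'
  have hfI : fI = fun α => -α * (1 - pc) * Real.log α + α * pc * Real.log pc
      - (1 - α + α * pc) * Real.log (1 - α + α * pc) := rfl
  have hH : H = fun q => -q * Real.log q - (1 - q) * Real.log (1 - q) := rfl
  have hg' : g = H pc / (1 - pc) := rfl
  have hast : αstar = 1 / (1 - pc + Real.exp (-(pc * Real.log pc) / (1 - pc))) := rfl
  clear_value pc fI H g αstar
  have h1p : (0:ℝ) < 1 - pc := by linarith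
  set t : ℝ := -(pc * Real.log pc) / (1 - pc) with ht
  have htid : (1 - pc) * t = -(pc * Real.log pc) := by
    rw [ht]; field_simp
  clear_value t
  have hE0 : (0:ℝ) < Real.exp t := Real.exp_pos t
  have hden : (0:ℝ) < 1 - pc + Real.exp t := by linarith
  have hms0 : 0 < αstar := by rw [hast]; positivity
  have hmul : αstar * (1 - pc + Real.exp t) = 1 := by
    rw [hast]; field_simp
  have hm1 : αstar * (1 - pc) < 1 := by nlinarith
  have hMs : 1 - αstar + αstar * pc = Real.exp t * αstar := by linear_combination -hmul
  have hlogM : Real.log (1 - αstar + αstar * pc) = t + Real.log αstar := by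
    rw [hMs, Real.log_mul hE0.ne' hms0.ne', Real.log_exp]
  constructor
  · intro h
    have hD : (1 - pc) * (Real.log (1 - αstar + αstar * pc) - Real.log αstar)
        + pc * Real.log pc = 0 := by
      rw [hlogM]; linear_combination htid
    have hgt : IsGreatest (fI '' Set.Icc 0 αs) (fI αstar) := by
      constructor
      · exact ⟨αstar, ⟨hms0.le, h⟩, rfl⟩
      · rintro y ⟨x, hx, rfl⟩
        have hb := fI_tangent_le pc αstar x hp1 hms0 hm1 hx.1
          (by nlinarith [hx.2])
        rw [hD] at hb
        simp only [hfI]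
        linarith [hb]
    rw [hgt.csSup_eq]
    have hg : g = t - Real.log (1 - pc) := by
      rw [hg', hH]
      rw [ht]; field_simp
    have hexpg : Real.exp g = Real.exp t / (1 - pc) := by
      rw [hg, Real.exp_sub, Real.exp_log h1p]
    have hq : 1 / (1 + Real.exp g) = (1 - pc) * αstar := by
      rw [hexpg, hast]
      field_simp
    have h1q : 1 - (1 - pc) * αstar = Real.exp t * αstar := by linear_combination -hmul
    rw [hfI, hH]
    simp only
    rw [div_eq_mul_one_div g (1 + Real.exp g), hq, hlogM, hMs, h1q,
      Real.log_mul h1p.ne' hms0.ne', Real.log_mul hE0.ne' hms0.ne', Real.log_exp, hg]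
    linear_combination αstar * htid
  · intro h
    have hMs2 : 0 < 1 - αs + αs * pc := by nlinarith
    have hm1s : αs * (1 - pc) < 1 := by nlinarith
    rw [hast, lt_div_iff₀ hden] at h
    have hratio : Real.exp t ≤ (1 - αs + αs * pc) / αs := by
      rw [le_div_iff₀ hs0]; nlinarith
    have hlog : t ≤ Real.log (1 - αs + αs * pc) - Real.log αs := by
      have h5 := (Real.le_log_iff_exp_le (div_pos hMs2 hs0)).2 hratio
      rwa [Real.log_div hMs2.ne' hs0.ne'] at h5
    have hD2 : 0 ≤ (1 - pc) * (Real.log (1 - αs + αs * pc) - Real.log αs)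
        + pc * Real.log pc := by nlinarith
    have hgt : IsGreatest (fI '' Set.Icc 0 αs) (fI αs) := by
      constructor
      · exact ⟨αs, ⟨hs0.le, le_refl αs⟩, rfl⟩
      · rintro y ⟨x, hx, rfl⟩
        have hb := fI_tangent_le pc αs x hp1 hs0 hm1s hx.1
          (by nlinarith [hx.2])
        have hprod : (x - αs) * ((1 - pc) * (Real.log (1 - αs + αs * pc) - Real.log αs)
            + pc * Real.log pc) ≤ 0 :=
          mul_nonpos_of_nonpos_of_nonneg (by linarith [hx.2]) hD2
        simp only [hfI]
        linarith [hb, hprod]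
    exact hgt.csSup_eq
end

section
/- For the Z-channel mutual information with crossover p_c(x₂) = ((x₂+c)/(A₁+x₂+c))^{nN} depending on interference level x₂ ≥ 0, the capacity-achieving value sup_α f_I(α, p_c(x₂)) is strictly decreasing in x₂; hence the maximum individual rate over x₂ ∈ {0, A₂} is attained at x₂ = 0. -/
open Real Set

/-- Algebraic identity: `H(1/(1+e^x)) - x/(1+e^x) = log(1+e^{-x})`. -/
lemma zkey (x : ℝ) :
    (-(1/(1+Real.exp x)) * Real.log (1/(1+Real.exp x))
      - (1 - 1/(1+Real.exp x)) * Real.log (1 - 1/(1+Real.exp x))) - x/(1+Real.exp x)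
      = Real.log (1 + Real.exp (-x)) := by
  have hE : 0 < Real.exp x := Real.exp_pos x
  have hs : 0 < 1 + Real.exp x := by positivity
  have h2 : (1 - 1/(1+Real.exp x)) = Real.exp x/(1+Real.exp x) := by
    field_simp
    ring
  have h1 : Real.log (1/(1+Real.exp x)) = -Real.log (1+Real.exp x) := by
    rw [one_div, Real.log_inv]
  have h3 : Real.log (Real.exp x/(1+Real.exp x)) = x - Real.log (1+Real.exp x) := by
    rw [Real.log_div (Real.exp_ne_zero x) hs.ne', Real.log_exp]
  have h4 : (1 : ℝ) + Real.exp (-x) = (1+Real.exp x)/Real.exp x := by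
    rw [Real.exp_neg]; field_simp; ring
  rw [h2, h1, h3, h4, Real.log_div hs.ne' (Real.exp_ne_zero x), Real.log_exp]
  field_simp
  ring

/-- `g(p) = H(p)/(1-p)` is strictly increasing on `(0,1)`. -/
lemma zg_mono :
    StrictMonoOn (fun p : ℝ => (-p * Real.log p - (1-p) * Real.log (1-p)) / (1-p))
      (Set.Ioo 0 1) := by
  have hd : ∀ p ∈ Set.Ioo (0:ℝ) 1,
      HasDerivAt (fun p : ℝ => (-p * Real.log p - (1-p) * Real.log (1-p)) / (1-p))
        (-Real.log p / (1-p)^2) p := by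
    intro p hp
    have hp0 : (0:ℝ) < p := hp.1
    have hp1 : p < 1 := hp.2
    have h1p : (0:ℝ) < 1 - p := by linarith
    have h1 : HasDerivAt (fun p : ℝ => p * Real.log p) (Real.log p + 1) p :=
      Real.hasDerivAt_mul_log hp0.ne'
    have hlin : HasDerivAt (fun p : ℝ => 1 - p) (-1) p := by
      simpa using (hasDerivAt_id p).const_sub 1
    have h2 : HasDerivAt (fun p : ℝ => (1-p) * Real.log (1-p))
        ((Real.log (1-p) + 1) * (-1)) p :=
      (Real.hasDerivAt_mul_log h1p.ne').comp p hlin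
    have hN : HasDerivAt (fun p : ℝ => -p * Real.log p - (1-p) * Real.log (1-p))
        (-(Real.log p + 1) - (Real.log (1-p) + 1) * (-1)) p := by
      have := h1.neg.sub h2
      exact this.congr_of_eventuallyEq
        (Filter.Eventually.of_forall fun q => by simp only [Pi.sub_apply, Pi.neg_apply]; ring)
    have := hN.div hlin h1p.ne'
    have h1p' : (1:ℝ) - p ≠ 0 := h1p.ne'
    exact (this.congr_deriv (by rw [div_left_inj' (pow_ne_zero 2 h1p')]; ring)).congr_of_eventuallyEq
      (Filter.Eventually.of_forall fun q => rfl)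
  have hcont : ContinuousOn
      (fun p : ℝ => (-p * Real.log p - (1-p) * Real.log (1-p)) / (1-p)) (Set.Ioo 0 1) :=
    fun p hp => ((hd p hp).differentiableAt).continuousAt.continuousWithinAt
  refine strictMonoOn_of_deriv_pos (convex_Ioo 0 1) hcont ?_
  intro p hp
  rw [interior_Ioo] at hp
  rw [(hd p hp).deriv]
  have hlog : Real.log p < 0 := Real.log_neg hp.1 hp.2
  have h2 : (0:ℝ) < (1-p)^2 := by nlinarith [hp.2]
  have h3 : (0:ℝ) < -Real.log p := by linarith
  calc (0:ℝ) < (-Real.log p) / (1-p)^2 := div_pos h3 h2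
    _ = -Real.log p / (1-p)^2 := by ring

/-- Strict antitonicity of the capacity expression. -/
lemma zC_anti :
    StrictAntiOn (fun p : ℝ =>
      (-(1/(1+Real.exp ((-p * Real.log p - (1-p) * Real.log (1-p)) / (1-p)))) *
          Real.log (1/(1+Real.exp ((-p * Real.log p - (1-p) * Real.log (1-p)) / (1-p))))
        - (1 - 1/(1+Real.exp ((-p * Real.log p - (1-p) * Real.log (1-p)) / (1-p)))) *
          Real.log (1 - 1/(1+Real.exp ((-p * Real.log p - (1-p) * Real.log (1-p)) / (1-p)))))
        - ((-p * Real.log p - (1-p) * Real.log (1-p)) / (1-p)) /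
            (1+Real.exp ((-p * Real.log p - (1-p) * Real.log (1-p)) / (1-p))))
      (Set.Ioo 0 1) := by
  intro a ha b hb hab
  have hg := zg_mono ha hb hab
  set ga := (-a * Real.log a - (1-a) * Real.log (1-a)) / (1-a) with hga
  set gb := (-b * Real.log b - (1-b) * Real.log (1-b)) / (1-b) with hgb
  calc _ = Real.log (1 + Real.exp (-gb)) := zkey gb
    _ < Real.log (1 + Real.exp (-ga)) := by
        apply Real.log_lt_log (by positivity)
        have : Real.exp (-gb) < Real.exp (-ga) := Real.exp_lt_exp.2 (by linarith)
        linarith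
    _ = _ := (zkey ga).symm

/-- The Z-channel capacity `C(p) = H(1/(1+e^{g(p)})) − g(p)/(1+e^{g(p)})` is
strictly decreasing in the crossover probability `p` on `(0,1)`; hence for the
crossover `p_c(x₂) = ((x₂+c)/(A₁+x₂+c))^{nN}` (increasing in the interference
level `x₂ ≥ 0`), the maximum individual rate over `x₂ ∈ {0, A₂}` is attained at
`x₂ = 0`. -/
theorem stmt_16 (A1 A2 c : ℝ) (nN : ℕ) (hA1 : 0 < A1) (hA2 : 0 < A2)
    (hc : 0 < c) (hn : 0 < nN) :
    let H : ℝ → ℝ := fun q => -q * Real.log q - (1 - q) * Real.log (1 - q)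
    let g : ℝ → ℝ := fun p => H p / (1 - p)
    let C : ℝ → ℝ := fun p => H (1 / (1 + Real.exp (g p))) - g p / (1 + Real.exp (g p))
    let pc : ℝ → ℝ := fun x2 => ((x2 + c) / (A1 + x2 + c)) ^ nN
    StrictAntiOn C (Set.Ioo 0 1) ∧ C (pc A2) < C (pc 0) := by
  intro H g C pc
  have hCanti : StrictAntiOn C (Set.Ioo 0 1) := zC_anti
  refine ⟨hCanti, ?_⟩
  have h0mem : pc 0 ∈ Set.Ioo (0:ℝ) 1 := by
    have hb0 : (0:ℝ) < (0 + c) / (A1 + 0 + c) := by positivity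
    have hb1 : (0 + c) / (A1 + 0 + c) < 1 := by
      rw [div_lt_one (by linarith)]; linarith
    exact ⟨pow_pos hb0 nN, pow_lt_one₀ hb0.le hb1 hn.ne'⟩
  have hAmem : pc A2 ∈ Set.Ioo (0:ℝ) 1 := by
    have hb0 : (0:ℝ) < (A2 + c) / (A1 + A2 + c) := by positivity
    have hb1 : (A2 + c) / (A1 + A2 + c) < 1 := by
      rw [div_lt_one (by linarith)]; linarith
    exact ⟨pow_pos hb0 nN, pow_lt_one₀ hb0.le hb1 hn.ne'⟩
  have hlt : pc 0 < pc A2 := by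
    apply pow_lt_pow_left₀ _ (by positivity) hn.ne'
    rw [div_lt_div_iff₀ (by linarith) (by linarith)]
    nlinarith
  exact hCanti h0mem hAmem hlt
end

section
/- For the two-user DLSR interference channel with binary inputs and no noise, the rate R₁ = I(X₁;Y₁) when treating interference as noise equals −log α₁ + α₁ q log q − α₁((1−α₁)/α₁ + q) log((1−α₁)/α₁ + q), where q = (1−α₂)p_{c10} + α₂ p_{c11}, P(X₁=A₁)=α₁, P(X₂=A₂)=α₂, p_{c10} = (c/(A₁+c))^{nN}, p_{c11} = ((A₂+c)/(A₁+A₂+c))^{nN}. -/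
/-- Two-user DLSR interference channel with binary inputs and no noise, treating
interference as noise.  Output `Y₁ = 0` surely if `X₁ = 0`; given `X₁ = A₁` the
output law is `W₀` (if `x₂ = 0`) or `W₁` (if `x₂ = A₂`), with
`W₀(0) = p_{c10} = (c/(A₁+c))^{nN}` and `W₁(0) = p_{c11} = ((A₂+c)/(A₁+A₂+c))^{nN}`.
Then `R₁ = I(X₁;Y₁) = H(Y₁) − H(Y₁|X₁)` equals
`−log α₁ + α₁ q log q − α₁((1−α₁)/α₁ + q) log((1−α₁)/α₁ + q)` with
`q = (1−α₂)p_{c10} + α₂ p_{c11}`. -/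
theorem stmt_19 (A1 A2 c : ℝ) (nN : ℕ) (hA1 : 0 < A1) (hA2 : 0 < A2)
    (hc : 0 < c) (hn : 0 < nN)
    (α1 α2 : ℝ) (hα1 : α1 ∈ Set.Ioo (0:ℝ) 1) (hα2 : α2 ∈ Set.Ioo (0:ℝ) 1)
    (W0 W1 : ℕ → ℝ) (hW0 : ∀ y, 0 ≤ W0 y) (hW1 : ∀ y, 0 ≤ W1 y)
    (hW0sum : ∑ y ∈ Finset.range (nN + 1), W0 y = 1)
    (hW1sum : ∑ y ∈ Finset.range (nN + 1), W1 y = 1)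
    (hW00 : W0 0 = (c / (A1 + c)) ^ nN)
    (hW10 : W1 0 = ((A2 + c) / (A1 + A2 + c)) ^ nN) :
    let M : ℕ → ℝ := fun y => (1 - α2) * W0 y + α2 * W1 y
    let Pm : ℕ → ℝ := fun y => α1 * M y + (1 - α1) * (if y = 0 then 1 else 0)
    let q : ℝ := (1 - α2) * (c / (A1 + c)) ^ nN
      + α2 * ((A2 + c) / (A1 + A2 + c)) ^ nN
    (∑ y ∈ Finset.range (nN + 1), Real.negMulLog (Pm y))
        - α1 * ∑ y ∈ Finset.range (nN + 1), Real.negMulLog (M y)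
      = -Real.log α1 + α1 * q * Real.log q
          - α1 * ((1 - α1) / α1 + q) * Real.log ((1 - α1) / α1 + q) := by
  obtain ⟨h1, h1'⟩ := hα1
  intro M Pm q
  have ha : (0:ℝ) < (c / (A1 + c)) ^ nN := pow_pos (div_pos hc (by linarith)) nN
  have hb : (0:ℝ) < ((A2 + c) / (A1 + A2 + c)) ^ nN :=
    pow_pos (div_pos (by linarith) (by linarith)) nN
  obtain ⟨h2, h2'⟩ := hα2
  have hq0 : 0 < q := by
    have : 0 < (1 - α2) * (c / (A1 + c)) ^ nN + α2 * ((A2 + c) / (A1 + A2 + c)) ^ nN := by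
      nlinarith
    exact this
  have hM0 : M 0 = q := by simp only [M, hW00, hW10, q]
  have hMsum : ∑ y ∈ Finset.range (nN + 1), M y = 1 := by
    simp only [M, Finset.sum_add_distrib, ← Finset.mul_sum, hW0sum, hW1sum]; ring
  have hS : ∑ i ∈ Finset.range nN, M (i + 1) = 1 - q := by
    have := Finset.sum_range_succ' M nN
    rw [hMsum, hM0] at this; linarith
  have hPm : ∑ y ∈ Finset.range (nN + 1), Real.negMulLog (Pm y)
      = Real.negMulLog (α1 * q + (1 - α1))
        + ∑ i ∈ Finset.range nN, Real.negMulLog (α1 * M (i + 1)) := by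
    rw [Finset.sum_range_succ' (fun y => Real.negMulLog (Pm y)) nN]
    simp only [Pm, Nat.succ_ne_zero, if_false, if_pos rfl, if_true, eq_self_iff_true, mul_zero, add_zero, mul_one, hM0]
    ring
  have hMl : ∑ y ∈ Finset.range (nN + 1), Real.negMulLog (M y)
      = Real.negMulLog q + ∑ i ∈ Finset.range nN, Real.negMulLog (M (i + 1)) := by
    rw [Finset.sum_range_succ' (fun y => Real.negMulLog (M y)) nN, hM0]; ring
  have hmul : ∑ i ∈ Finset.range nN, Real.negMulLog (α1 * M (i + 1))
      = (1 - q) * Real.negMulLog α1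
        + α1 * ∑ i ∈ Finset.range nN, Real.negMulLog (M (i + 1)) := by
    rw [← hS, Finset.sum_mul, Finset.mul_sum, ← Finset.sum_add_distrib]
    exact Finset.sum_congr rfl fun i _ => by rw [Real.negMulLog_mul]
  rw [hPm, hMl, hmul]
  have hs : 0 < α1 * q + (1 - α1) := by nlinarith
  have hlog : Real.log ((1 - α1) / α1 + q)
      = Real.log (α1 * q + (1 - α1)) - Real.log α1 := by
    rw [show (1 - α1) / α1 + q = (α1 * q + (1 - α1)) / α1 by field_simp; ring,
      Real.log_div (by positivity) (by positivity)]
  rw [hlog]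
  simp only [Real.negMulLog]
  field_simp
  ring
end
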